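/- Let k be a field with char(k) ≠ 2, V a finite-dimensional k-vector space, W = V* its dual, φ ∈ Sym²(V) ⊆ Hom(W, V) a symmetric tensor, and λ = v₁ ∧ ⋯ ∧ v_p ∈ Λ^p(V) a nonzero decomposable element spanning the subspace V_p ⊆ V. Then the Koszul-type contraction φ ∪ λ ∈ V ⊗ Λ^{p+1}(V), defined on generators by (v·w) ⊗ λ ↦ v ⊗ (w ∧ λ) + w ⊗ (v ∧ λ), vanishes if and only if the image of φ (as a map W → V) is contained in V_p. -/

import Mathlib

open TensorProduct

/-- The map `V ⊗ V → Hom(V*, V)` sending `v ⊗ w` to `f ↦ f(v) • w`; on symmetric tensors this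
is the identification of `Sym²(V)` with symmetric maps `V* → V`. -/
noncomputable def tensorToHom (k V : Type*) [Field k] [AddCommGroup V] [Module k V] :
    V ⊗[k] V →ₗ[k] (Module.Dual k V →ₗ[k] V) :=
  TensorProduct.lift (LinearMap.smulRightₗ ∘ₗ Module.Dual.eval k V)

/-- The Koszul-type contraction with `λ ∈ Λ•(V)`: the map `V ⊗ V → V ⊗ Λ•(V)` sending
`v ⊗ w ↦ v ⊗ (w ∧ λ)`.  On a *symmetric* tensor `v ⊗ w + w ⊗ v` (representing `v·w ∈ Sym²V`)
it yields `v ⊗ (w ∧ λ) + w ⊗ (v ∧ λ)`, which is exactly the contraction of the paper. -/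
noncomputable def cupWith (k V : Type*) [Field k] [AddCommGroup V] [Module k V]
    (lam : ExteriorAlgebra k V) :
    V ⊗[k] V →ₗ[k] V ⊗[k] ExteriorAlgebra k V :=
  TensorProduct.map LinearMap.id ((LinearMap.mulRight k lam) ∘ₗ ExteriorAlgebra.ι k)

lemma iotaMulti_ne_zero {k V : Type*} [Field k] [AddCommGroup V] [Module k V]
    {n : ℕ} {u : Fin n → V} (hu : LinearIndependent k u) :
    ExteriorAlgebra.ιMulti k n u ≠ 0 := by
  classical
  set W := Submodule.span k (Set.range u)
  let B : Module.Basis (Fin n) k W := Module.Basis.span hu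
  obtain ⟨π, hπ⟩ := W.subtype.exists_leftInverse_of_injective W.ker_subtype
  let f : Fin n → Module.Dual k V := fun i => (B.coord i) ∘ₗ π
  let g : V →ₗ[k] (Fin n → k) := LinearMap.pi f
  let A : V [⋀^Fin n]→ₗ[k] k := (Matrix.detRowAlternating).compLinearMap g
  have hfu : ∀ i j, f j (u i) = if i = j then 1 else 0 := by
    intro i j
    have h1 : u i = W.subtype (B i) := (congrArg Subtype.val (Module.Basis.span_apply hu i)).symm
    have h2 : π (u i) = B i := by
      rw [h1, ← LinearMap.comp_apply, hπ, LinearMap.id_apply]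
    simp [f, h2, Module.Basis.coord_apply, Module.Basis.repr_self, Finsupp.single_apply]
  have hAu : A u = 1 := by
    have : (Matrix.of fun i => g (u i)) = (1 : Matrix (Fin n) (Fin n) k) := by
      ext i j
      simp [g, Matrix.one_apply, hfu i j]
    have h1 : A u = Matrix.det (Matrix.of fun i => g (u i)) := rfl
    rw [h1, this, Matrix.det_one]
  intro h0
  let F : ∀ i, V [⋀^Fin i]→ₗ[k] k := Function.update (fun i => 0) n A
  have := ExteriorAlgebra.liftAlternating_apply_ιMulti F u
  rw [h0, map_zero] at this
  simp only [F, Function.update_self] at this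
  rw [hAu] at this
  exact zero_ne_one this

lemma iota_mul_ιMulti_mem {k V : Type*} [Field k] [AddCommGroup V] [Module k V]
    {p : ℕ} (v : Fin p → V) (i : Fin p) :
    ExteriorAlgebra.ι k (v i) * ExteriorAlgebra.ιMulti k p v = 0 := by
  have h1 : ExteriorAlgebra.ιMulti k (p + 1) (Fin.cons (v i) v : Fin (p + 1) → V) = 0 := by
    apply AlternatingMap.map_eq_zero_of_eq _ _ (i := 0) (j := i.succ)
    · simp
    · exact (Fin.succ_ne_zero i).symm
  have h2 := ExteriorAlgebra.ιMulti_succ_apply (R := k) (Fin.cons (v i) v : Fin (p + 1) → V)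
  rw [h1] at h2
  have h3 : Matrix.vecTail (Fin.cons (v i) v : Fin (p + 1) → V) = v := by
    ext j; simp [Matrix.vecTail]
  rw [h3, Fin.cons_zero] at h2
  exact h2.symm

/-- Let `k` be a field with `char k ≠ 2`, `V` finite-dimensional,
`φ ∈ Sym²(V) ⊆ V ⊗ V` a symmetric tensor (viewed as a symmetric map `V* → V` via
`tensorToHom`), and `λ = v₁ ∧ ⋯ ∧ v_p` a nonzero decomposable element of `Λ^p(V)` (the `vᵢ`
linearly independent), spanning `V_p = span(v₁, …, v_p)`.  Then the Koszul-type contraction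
`φ ∪ λ ∈ V ⊗ Λ^{p+1}(V)` vanishes if and only if the image of `φ` as a map `V* → V` is
contained in `V_p`. -/
theorem stmt_8 {k V : Type*} [Field k] [AddCommGroup V] [Module k V]
    [FiniteDimensional k V] (hchar : (2 : k) ≠ 0)
    (p : ℕ) (v : Fin p → V) (hv : LinearIndependent k v)
    (φ : V ⊗[k] V) (hφ : TensorProduct.comm k V V φ = φ) :
    cupWith k V ((List.ofFn fun i => ExteriorAlgebra.ι k (v i)).prod) φ = 0 ↔
      LinearMap.range (tensorToHom k V φ) ≤ Submodule.span k (Set.range v) := by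
  classical
  set lam : ExteriorAlgebra k V := (List.ofFn fun i => ExteriorAlgebra.ι k (v i)).prod with hlamdef
  have hlam' : lam = ExteriorAlgebra.ιMulti k p v := (ExteriorAlgebra.ιMulti_apply v).symm
  set g : V →ₗ[k] ExteriorAlgebra k V := (LinearMap.mulRight k lam) ∘ₗ ExteriorAlgebra.ι k with hgdef
  have hgapp : ∀ x, g x = ExteriorAlgebra.ι k x * lam := fun x => rfl
  have hker : LinearMap.ker g = Submodule.span k (Set.range v) := by
    apply le_antisymm
    · intro x hx
      by_contra hxs
      have hind : LinearIndependent k (Fin.cons x v : Fin (p + 1) → V) :=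
        (linearIndependent_fin_cons).mpr ⟨hv, hxs⟩
      apply iotaMulti_ne_zero hind
      rw [ExteriorAlgebra.ιMulti_succ_apply]
      have h3 : Matrix.vecTail (Fin.cons x v : Fin (p + 1) → V) = v := by
        ext j; simp [Matrix.vecTail]
      rw [h3, Fin.cons_zero, ← hlam', ← hgapp]
      exact LinearMap.mem_ker.mp hx
    · rw [Submodule.span_le]
      rintro _ ⟨i, rfl⟩
      refine LinearMap.mem_ker.mpr ?_
      rw [hgapp, hlam']
      exact iota_mul_ιMulti_mem v i
  set n := Module.finrank k V with hn
  set b : Module.Basis (Fin n) k V := Module.finBasis k V with hb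
  set w : Fin n → V := fun j => tensorToHom k V φ (b.coord j) with hw
  have htt : ∀ (a c : V) (f : Module.Dual k V), tensorToHom k V (a ⊗ₜ[k] c) f = f a • c := by
    intro a c f
    simp [tensorToHom]
  have hdecomp : φ = ∑ j, b j ⊗ₜ[k] w j := by
    have key : ∀ (ψ : V ⊗[k] V), ψ = ∑ j, b j ⊗ₜ[k] (tensorToHom k V ψ (b.coord j)) := by
      intro ψ
      induction ψ using TensorProduct.induction_on with
      | zero => simp
      | tmul a c =>
        have h1 : ∀ j, b j ⊗ₜ[k] (tensorToHom k V (a ⊗ₜ[k] c) (b.coord j))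
            = (b.repr a j • b j) ⊗ₜ[k] c := by
          intro j
          rw [htt, Module.Basis.coord_apply, TensorProduct.tmul_smul, TensorProduct.smul_tmul']
        rw [Finset.sum_congr rfl fun j _ => h1 j, ← TensorProduct.sum_tmul, b.sum_repr a]
      | add x y hx hy =>
        simp only [map_add, LinearMap.add_apply, TensorProduct.tmul_add]
        rw [Finset.sum_add_distrib, ← hx, ← hy]
    exact key φ
  have hcup : cupWith k V lam φ = ∑ j, b j ⊗ₜ[k] (g (w j)) := by
    conv_lhs => rw [hdecomp]
    rw [map_sum]
    refine Finset.sum_congr rfl fun j _ => ?_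
    simp [cupWith, hgdef]
  constructor
  · intro h0
    rw [hcup] at h0
    have hwker : ∀ i, g (w i) = 0 := by
      intro i
      let ρ : V ⊗[k] ExteriorAlgebra k V →ₗ[k] ExteriorAlgebra k V :=
        (TensorProduct.lid k _).toLinearMap ∘ₗ (LinearMap.rTensor _ (b.coord i))
      have hρ := congrArg ρ h0
      rw [map_zero, map_sum] at hρ
      have hρj : ∀ j, ρ (b j ⊗ₜ[k] (g (w j))) = (if j = i then (1 : k) else 0) • g (w j) := by
        intro j
        simp [ρ, Module.Basis.coord_apply, Module.Basis.repr_self, Finsupp.single_apply]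
      rw [Finset.sum_congr rfl fun j _ => hρj j] at hρ
      rw [Finset.sum_eq_single i (fun j _ hji => by rw [if_neg hji, zero_smul])
        (fun h => absurd (Finset.mem_univ i) h)] at hρ
      rwa [if_pos rfl, one_smul] at hρ
    have hwspan : ∀ j, w j ∈ Submodule.span k (Set.range v) := fun j =>
      hker ▸ LinearMap.mem_ker.mpr (hwker j)
    rintro y ⟨f, rfl⟩
    rw [hdecomp, map_sum, LinearMap.sum_apply]
    refine Submodule.sum_mem _ fun j _ => ?_
    rw [htt]
    exact Submodule.smul_mem _ _ (hwspan j)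
  · intro hr
    rw [hcup]
    have hz : ∀ j, g (w j) = 0 := by
      intro j
      have : w j ∈ Submodule.span k (Set.range v) := hr ⟨b.coord j, rfl⟩
      rw [← hker] at this
      exact LinearMap.mem_ker.mp this
    simp [hz]
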